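/- arXiv:2305.19338 — 4 statements merged into one kernel-verified Lean document; each statement's English description precedes it below -/
import Mathlib

section
/- For every real $x$ with $0 < x < 1$, $2x - \frac{\left(\frac{1}{2}+\frac{5x}{8}\right)^2}{\frac{1}{2}+\frac{5x}{16}} - \frac{4}{x}\log\left(\frac{2-x}{2(1-x)}\right) + \frac{4}{8-5x} + 2 \leq 0$. -/
lemma pade_log (y : ℝ) (hy : 1 ≤ y) : 2 * (y - 1) / (y + 1) ≤ Real.log y := by
  have key : MonotoneOn (fun t : ℝ => Real.log t - 2 * (t - 1) / (t + 1)) (Set.Ici 1) := by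
    apply monotoneOn_of_hasDerivWithinAt_nonneg (convex_Ici 1)
      (f' := fun t => 1 / t - 4 / (t + 1) ^ 2)
    · intro t ht
      simp only [Set.mem_Ici] at ht
      have ht0 : t ≠ 0 := by linarith
      exact ((Real.continuousAt_log ht0).continuousWithinAt.sub
        ((continuous_const.mul (continuous_id.sub continuous_const)).continuousOn.div
          (continuous_id.add continuous_const).continuousOn (fun z hz => by
            simp only [Set.mem_Ici, id, Pi.add_apply] at hz ⊢; intro h; linarith) t ht))
    · intro t ht
      rw [interior_Ici] at ht
      simp only [Set.mem_Ioi] at ht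
      have ht0 : t ≠ 0 := by intro h; rw [h] at ht; linarith
      have ht1 : t + 1 ≠ 0 := by intro h; nlinarith
      have hl := Real.hasDerivAt_log ht0
      have hd := ((((hasDerivAt_id t).sub_const 1).const_mul 2).div
        ((hasDerivAt_id t).add_const 1) ht1)
      simp only [id] at hd
      have hsub := hl.sub hd
      have heqd : t⁻¹ - (2 * 1 * (t + 1) - 2 * (t - 1) * 1) / (t + 1) ^ 2
          = 1 / t - 4 / (t + 1) ^ 2 := by
        rw [inv_eq_one_div]
        congr 1
        rw [div_eq_div_iff (by positivity) (by positivity)]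
        ring
      rw [heqd] at hsub
      exact hsub.hasDerivWithinAt
    · intro t ht
      rw [interior_Ici] at ht
      simp only [Set.mem_Ioi] at ht
      have ht0 : (0:ℝ) < t := by linarith
      have ht1 : (0:ℝ) < (t + 1) ^ 2 := by positivity
      rw [sub_nonneg, div_le_div_iff₀ ht1 ht0]
      nlinarith [sq_nonneg (t - 1)]
  have h := key (Set.self_mem_Ici) (Set.mem_Ici.mpr hy) hy
  simp only [Real.log_one] at h
  linarith [h]

theorem stmt_12 (x : ℝ) (hx0 : 0 < x) (hx1 : x < 1) :
    2 * x - (1 / 2 + 5 * x / 8) ^ 2 / (1 / 2 + 5 * x / 16)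
      - (4 / x) * Real.log ((2 - x) / (2 * (1 - x)))
      + 4 / (8 - 5 * x) + 2 ≤ 0 := by
  have h1 : (0:ℝ) < 1 - x := by linarith
  set y : ℝ := (2 - x) / (2 * (1 - x)) with hy
  have hy1 : 1 ≤ y := by
    rw [hy, le_div_iff₀ (by linarith)]
    linarith
  have hlog : 2 * (y - 1) / (y + 1) ≤ Real.log y := pade_log y hy1
  have d3 : (0:ℝ) < 4 - 3 * x := by linarith
  have hval : 2 * (y - 1) / (y + 1) = 2 * x / (4 - 3 * x) := by
    rw [hy]
    rw [div_eq_div_iff (by positivity) (by positivity)]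
    field_simp
    ring
  have hlog2 : 2 * x / (4 - 3 * x) ≤ Real.log y := hval ▸ hlog
  have hx4 : (0:ℝ) < 4 / x := by positivity
  have hmul : (4 / x) * (2 * x / (4 - 3 * x)) ≤ (4 / x) * Real.log y :=
    mul_le_mul_of_nonneg_left hlog2 (le_of_lt hx4)
  have heq : (4 / x) * (2 * x / (4 - 3 * x)) = 8 / (4 - 3 * x) := by
    rw [div_mul_div_comm, div_eq_div_iff (by positivity) (by positivity)]
    ring
  rw [heq] at hmul
  have d1 : (0:ℝ) < 1 / 2 + 5 * x / 16 := by linarith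
  have d2 : (0:ℝ) < 8 - 5 * x := by linarith
  have hrat : 2 * x - (1 / 2 + 5 * x / 8) ^ 2 / (1 / 2 + 5 * x / 16)
      + 4 / (8 - 5 * x) + 2 ≤ 8 / (4 - 3 * x) := by
    rw [← sub_nonneg]
    have expand : 8 / (4 - 3 * x) - (2 * x - (1 / 2 + 5 * x / 8) ^ 2 / (1 / 2 + 5 * x / 16)
        + 4 / (8 - 5 * x) + 2)
        = (128 * x + 1056 * x ^ 2 - 300 * x ^ 3 - 225 * x ^ 4)
          / (4 * (4 - 3 * x) * (8 - 5 * x) * (8 + 5 * x)) := by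
      have d4 : (0:ℝ) < 8 + 5 * x := by linarith
      have := d2.ne'; have := d3.ne'; have := d4.ne'; have := d1.ne'
      have : (8:ℝ) - x * 5 ≠ 0 := by intro h; linarith
      field_simp
      ring
    rw [expand]
    apply div_nonneg
    · nlinarith [mul_nonneg (mul_nonneg hx0.le hx0.le) (sub_nonneg.mpr hx1.le),
        mul_nonneg (mul_nonneg (mul_nonneg hx0.le hx0.le) hx0.le) (sub_nonneg.mpr hx1.le),
        sq_nonneg x]
    · positivity
  linarith
end

section
/- For every real $k \geq 1$, $(7k-4)\log\left(\frac{k^2+7k-2}{8k}\right) + (4-6k)\log\left(\frac{3}{4}-\frac{1}{4k}\right) > 0$. -/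
theorem stmt_13 (k : ℝ) (hk : 1 ≤ k) :
    (7 * k - 4) * Real.log ((k ^ 2 + 7 * k - 2) / (8 * k))
      + (4 - 6 * k) * Real.log (3 / 4 - 1 / (4 * k)) > 0 := by
  have hk0 : (0:ℝ) < k := by linarith
  set A : ℝ := (k ^ 2 + 7 * k - 2) / (8 * k) with hAdef
  set B : ℝ := 3 / 4 - 1 / (4 * k) with hBdef
  have hnum : (0:ℝ) < k ^ 2 + 7 * k - 2 := by nlinarith
  have hA : 0 < A := div_pos hnum (by linarith)
  have hB : 0 < B := by
    rw [hBdef]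
    have : 1 / (4 * k) ≤ 1 / 4 := by
      apply div_le_div_of_nonneg_left (by norm_num) (by norm_num) (by linarith)
    linarith
  have hB1 : B ≠ 1 := by
    have : 1 / (4 * k) > 0 := by positivity
    rw [hBdef]; intro h; linarith
  -- lower bound for log A
  have hlogA : 1 - 1 / A ≤ Real.log A := by
    have h := Real.log_le_sub_one_of_pos (x := A⁻¹) (by positivity)
    rw [Real.log_inv] at h
    have : 1 / A = A⁻¹ := one_div A
    linarith
  -- strict upper bound for log B
  have hlogB : Real.log B < B - 1 := by
    have h := Real.add_one_lt_exp (x := Real.log B) (by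
      intro h0
      have := Real.exp_log hB
      rw [h0, Real.exp_zero] at this
      exact hB1 this.symm)
    rw [Real.exp_log hB] at h
    linarith
  have h1 : (7 * k - 4) * (1 - 1 / A) ≤ (7 * k - 4) * Real.log A :=
    mul_le_mul_of_nonneg_left hlogA (by linarith)
  have h2 : (4 - 6 * k) * (B - 1) < (4 - 6 * k) * Real.log B := by
    apply mul_lt_mul_of_neg_left hlogB (by linarith)
  have key : (7 * k - 4) * (1 - 1 / A) + (4 - 6 * k) * (B - 1)
      = 2 * (17 * k ^ 2 - 4) * (k ^ 2 - 1) / (4 * k * (k ^ 2 + 7 * k - 2)) := by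
    rw [hAdef, hBdef]
    have hne : k ^ 2 + 7 * k - 2 ≠ 0 := ne_of_gt hnum
    have hk0' : k ≠ 0 := ne_of_gt hk0
    field_simp
    have hne2 : k * (k + 7) - 2 ≠ 0 := ne_of_gt (by nlinarith)
    field_simp
    ring
  have hkey : 0 ≤ (7 * k - 4) * (1 - 1 / A) + (4 - 6 * k) * (B - 1) := by
    rw [key]
    apply div_nonneg
    · have h3 : (0:ℝ) ≤ 17 * k ^ 2 - 4 := by nlinarith
      have h4 : (0:ℝ) ≤ k ^ 2 - 1 := by nlinarith
      nlinarith
    · nlinarith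
  have hsum : (7 * k - 4) * (1 - 1 / A) + (4 - 6 * k) * (B - 1)
      < (7 * k - 4) * Real.log A + (4 - 6 * k) * Real.log B :=
    add_lt_add_of_le_of_lt h1 h2
  linarith
end

section
/- For every integer $k \geq 13$, $\frac{k^2+3k-2}{2k^2}\log\left(\frac{k^2+3k-2}{2k^2}\right) - \frac{k-1}{k^2}\log\left(\frac{k-1}{k^2}\right) - \frac{(k-1)\log k}{2k} + \frac{1}{2}\log k < 0$. -/
set_option maxHeartbeats 2000000 in
theorem stmt_15 (k : ℕ) (hk : 13 ≤ k) :
    ((k : ℝ) ^ 2 + 3 * k - 2) / (2 * k ^ 2) *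
        Real.log (((k : ℝ) ^ 2 + 3 * k - 2) / (2 * k ^ 2))
      - ((k : ℝ) - 1) / k ^ 2 * Real.log (((k : ℝ) - 1) / k ^ 2)
      - ((k : ℝ) - 1) * Real.log k / (2 * k)
      + (1 / 2) * Real.log k < 0 := by
  have hr : (13:ℝ) ≤ (k:ℝ) := by exact_mod_cast hk
  set r : ℝ := (k:ℝ) with hrdef
  have hr0 : (0:ℝ) < r := by linarith
  have hr1 : (0:ℝ) < r - 1 := by linarith
  have hr2 : (0:ℝ) < r ^ 2 := by positivity
  have hnum : (0:ℝ) < r ^ 2 + 3 * r - 2 := by nlinarith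
  set a : ℝ := (r ^ 2 + 3 * r - 2) / r ^ 2 with ha
  set y : ℝ := (r - 1) / r ^ 2 with hy
  have ha0 : 0 < a := by positivity
  have hy0 : 0 < y := by positivity
  -- log decompositions
  have hlogx : Real.log ((r ^ 2 + 3 * r - 2) / (2 * r ^ 2))
      = Real.log a - Real.log 2 := by
    rw [show (r ^ 2 + 3 * r - 2) / (2 * r ^ 2) = a / 2 by rw [ha]; ring,
      Real.log_div (ne_of_gt ha0) (by norm_num)]
  have hlogy : Real.log y = Real.log (r - 1) - 2 * Real.log r := by
    rw [hy, Real.log_div (ne_of_gt hr1) (ne_of_gt hr2), Real.log_pow]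
    push_cast; ring
  -- basic log bounds
  have hA : Real.log a ≤ a - 1 := Real.log_le_sub_one_of_pos ha0
  have hB : Real.log r - Real.log (r - 1) ≤ 1 / (r - 1) := by
    have h := Real.log_le_sub_one_of_pos (show 0 < r / (r - 1) by positivity)
    rw [Real.log_div (ne_of_gt hr0) (ne_of_gt hr1)] at h
    have : r / (r - 1) - 1 = 1 / (r - 1) := by field_simp; ring
    linarith [this ▸ h]
  have hC : Real.log r ≤ Real.log 13 + (r / 13 - 1) := by
    have h := Real.log_le_sub_one_of_pos (show 0 < r / 13 by positivity)
    rw [Real.log_div (ne_of_gt hr0) (by norm_num)] at h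
    linarith
  have hL2 : (0.6931471803:ℝ) < Real.log 2 := Real.log_two_gt_d9
  have hL13 : 3 * Real.log 13 ≤ 11 * Real.log 2 + 149 / 2048 := by
    have h1 : Real.log 2197 = 3 * Real.log 13 := by
      rw [show (2197:ℝ) = 13 ^ 3 by norm_num, Real.log_pow]; push_cast; ring
    have h2 : Real.log 2197 = 11 * Real.log 2 + Real.log (2197 / 2048) := by
      rw [Real.log_div (by norm_num) (by norm_num),
        show (2048:ℝ) = 2 ^ 11 by norm_num, Real.log_pow]
      push_cast; ring
    have h3 : Real.log (2197 / 2048) ≤ 149 / 2048 := by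
      have := Real.log_le_sub_one_of_pos (show (0:ℝ) < 2197 / 2048 by norm_num)
      norm_num at this ⊢; linarith
    linarith
  -- rewrite goal expression
  have heq : ((r:ℝ) ^ 2 + 3 * r - 2) / (2 * r ^ 2) *
        Real.log ((r ^ 2 + 3 * r - 2) / (2 * r ^ 2))
      - (r - 1) / r ^ 2 * Real.log ((r - 1) / r ^ 2)
      - (r - 1) * Real.log r / (2 * r)
      + (1 / 2) * Real.log r
      = a / 2 * Real.log a - a / 2 * Real.log 2 - y * Real.log (r - 1)
        + y * Real.log r + (y + 1 / (2 * r)) * Real.log r := by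
    rw [hlogx, ← hy, hlogy, ha, hy]
    field_simp
    ring
  rw [heq]
  -- bound each log term
  have t1 : a / 2 * Real.log a ≤ a / 2 * (a - 1) :=
    mul_le_mul_of_nonneg_left hA (by positivity)
  have t2 : y * Real.log r - y * Real.log (r - 1) ≤ y * (1 / (r - 1)) := by
    have := mul_le_mul_of_nonneg_left hB (le_of_lt hy0)
    nlinarith [this]
  have hcpos : (0:ℝ) ≤ y + 1 / (2 * r) := by positivity
  have t3 : (y + 1 / (2 * r)) * Real.log r
      ≤ (y + 1 / (2 * r)) * (Real.log 13 + (r / 13 - 1)) :=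
    mul_le_mul_of_nonneg_left hC hcpos
  have t4 : (y + 1 / (2 * r)) * Real.log 13
      ≤ (y + 1 / (2 * r)) * ((11 * Real.log 2 + 149 / 2048) / 3) :=
    mul_le_mul_of_nonneg_left (by linarith) hcpos
  -- coefficient of log 2 is negative
  have hcoef : 11 / 3 * (y + 1 / (2 * r)) - a / 2 ≤ 0 := by
    have hre : 11 / 3 * (y + 1 / (2 * r)) - a / 2
        = (-(3 * r ^ 2) + 24 * r - 16) / (6 * r ^ 2) := by
      rw [hy, ha]; field_simp; ring
    rw [hre]
    apply div_nonpos_of_nonpos_of_nonneg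
    · nlinarith [sq_nonneg (r - 13), hr]
    · positivity
  have t5 : (11 / 3 * (y + 1 / (2 * r)) - a / 2) * Real.log 2
      ≤ (11 / 3 * (y + 1 / (2 * r)) - a / 2) * (0.6931471803:ℝ) :=
    mul_le_mul_of_nonpos_left (le_of_lt hL2) hcoef
  -- final rational inequality
  have hfin : a / 2 * (a - 1) + y * (1 / (r - 1))
      + (y + 1 / (2 * r)) * (149 / 6144 + (r / 13 - 1))
      + (11 / 3 * (y + 1 / (2 * r)) - a / 2) * (0.6931471803:ℝ) < 0 := by
    have hre : a / 2 * (a - 1) + y * (1 / (r - 1))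
        + (y + 1 / (2 * r)) * (149 / 6144 + (r / 13 - 1))
        + (11 / 3 * (y + 1 / (2 * r)) - a / 2) * (0.6931471803:ℝ)
        = ((r ^ 2 + 3 * r - 2) * (3 * r - 2) / 2 + r ^ 2
          + (3 * r - 2) * r ^ 2 / 2 * (149 / 6144 + (r / 13 - 1))
          + (11 / 6 * (3 * r - 2) - (r ^ 2 + 3 * r - 2) / 2) * r ^ 2
              * (0.6931471803:ℝ)) / r ^ 4 := by
      rw [hy, ha]
      field_simp
      ring
    rw [hre]
    apply div_neg_of_neg_of_pos
    · have h13 : (0:ℝ) ≤ r - 13 := by linarith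
      nlinarith [h13, sq_nonneg (r - 13), mul_nonneg (mul_nonneg h13 h13) h13,
        mul_nonneg (mul_nonneg (mul_nonneg h13 h13) h13) h13]
    · positivity
  linarith [t1, t2, t3, t4, t5, hfin]
end

section
/- For every integer $k \geq 2$, $\frac{k^2+3k-2}{2k^2}\log\left(\frac{k^2+3k-2}{2k^2}\right) - \frac{k-1}{k^2}\log\left(\frac{k-1}{k^2}\right) - \frac{(k-1)\log k}{k} + \frac{3}{2}\log k > 0$. -/
theorem stmt_16 (k : ℕ) (hk : 2 ≤ k) :
    ((k : ℝ) ^ 2 + 3 * k - 2) / (2 * k ^ 2) *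
        Real.log (((k : ℝ) ^ 2 + 3 * k - 2) / (2 * k ^ 2))
      - ((k : ℝ) - 1) / k ^ 2 * Real.log (((k : ℝ) - 1) / k ^ 2)
      - ((k : ℝ) - 1) * Real.log k / k
      + (3 / 2) * Real.log k > 0 := by
  have hx : (2 : ℝ) ≤ (k : ℝ) := by exact_mod_cast hk
  set x : ℝ := (k : ℝ) with hxdef
  have hx0 : (0 : ℝ) < x := by linarith
  have hx2 : (0 : ℝ) < x ^ 2 := by positivity
  have hnum : (0 : ℝ) < x ^ 2 + 3 * x - 2 := by nlinarith
  have hA0 : 0 < (x ^ 2 + 3 * x - 2) / (2 * x ^ 2) := by positivity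
  have hAgt : 1 / 2 < (x ^ 2 + 3 * x - 2) / (2 * x ^ 2) := by
    rw [lt_div_iff₀ (by positivity)]; nlinarith
  -- lower bound on A log A
  have hlogA : Real.log ((x ^ 2 + 3 * x - 2) / (2 * x ^ 2)) ≥
      1 - ((x ^ 2 + 3 * x - 2) / (2 * x ^ 2))⁻¹ := by
    have h := Real.log_le_sub_one_of_pos (inv_pos.mpr hA0)
    rw [Real.log_inv] at h
    linarith
  have hAlogA : (x ^ 2 + 3 * x - 2) / (2 * x ^ 2) *
      Real.log ((x ^ 2 + 3 * x - 2) / (2 * x ^ 2)) ≥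
      (x ^ 2 + 3 * x - 2) / (2 * x ^ 2) - 1 := by
    have h1 := mul_le_mul_of_nonneg_left hlogA (le_of_lt hA0)
    have h2 : (x ^ 2 + 3 * x - 2) / (2 * x ^ 2) *
        ((x ^ 2 + 3 * x - 2) / (2 * x ^ 2))⁻¹ = 1 :=
      mul_inv_cancel₀ (ne_of_gt hA0)
    nlinarith [h1, h2]
  -- B log B < 0
  have hB0 : 0 < (x - 1) / x ^ 2 := div_pos (by linarith) hx2
  have hB1 : (x - 1) / x ^ 2 < 1 := by
    rw [div_lt_one hx2]; nlinarith
  have hBlogB : (x - 1) / x ^ 2 * Real.log ((x - 1) / x ^ 2) < 0 :=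
    mul_neg_of_pos_of_neg hB0 (Real.log_neg hB0 hB1)
  rcases Nat.lt_or_ge k 3 with h3 | h3
  · -- k = 2
    have hk2 : k = 2 := by omega
    subst hk2
    have hl2 : (0 : ℝ) < Real.log 2 := Real.log_pos (by norm_num)
    rw [show x = (2:ℝ) by norm_num [hxdef]]
    have e2 : ((2 : ℝ) ^ 2 + 3 * 2 - 2) / (2 * 2 ^ 2) = 1 := by norm_num
    have e3 : ((2 : ℝ) - 1) / 2 ^ 2 = 1 / 4 := by norm_num
    rw [e2, e3, Real.log_one]
    have e4 : Real.log (1 / 4 : ℝ) = -(2 * Real.log 2) := by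
      rw [show ((1:ℝ)/4) = ((2:ℝ)^(2:ℕ))⁻¹ by norm_num, Real.log_inv,
        Real.log_pow]
      push_cast; ring
    rw [e4]
    nlinarith [hl2]
  · -- k ≥ 3
    have hx3 : (3 : ℝ) ≤ x := by
      rw [hxdef]; exact_mod_cast h3
    have hlogx : 1 ≤ Real.log x := by
      rw [Real.le_log_iff_exp_le hx0]
      calc Real.exp 1 ≤ 2.7182818286 := le_of_lt Real.exp_one_lt_d9
        _ ≤ 3 := by norm_num
        _ ≤ x := hx3
    have hix : (0 : ℝ) < 1 / x := by positivity
    have hc : (3 / 2) * Real.log x - (x - 1) * Real.log x / x ≥ 1 / 2 + 1 / x := by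
      have he : (3 / 2) * Real.log x - (x - 1) * Real.log x / x
          = (1 / 2 + 1 / x) * Real.log x := by
        field_simp; ring
      rw [he]
      nlinarith [hix, hlogx]
    linarith [hAlogA, hBlogB, hc, hAgt, hix]
end
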